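/- arXiv:1605.00933 — 3 statements merged into one kernel-verified Lean document; each statement's English description precedes it below -/
import Mathlib

section
/- Let f : ℝ^d → ℝ be twice continuously differentiable with μ·I ⪯ ∇²f(x) ⪯ L·I for all x, for constants 0 < μ < L < ∞ (so f is μ-strongly convex and has a unique minimizer x* with optimal value f* = f(x*)). Fix constants 0 < Γ ≤ Δ and a stepsize 0 < ε < 2Γ/(L·Δ²). Let (A(t))_{t≥0} be any sequence of symmetric d×d matrices satisfying Γ·I ⪯ A(t) ⪯ Δ·I for all t, and define x(t+1) = x(t) − ε·A(t)·∇f(x(t)). Then, with c := 1 − (2μΓε − μLΔ²ε²), one has 0 < c < 1 and f(x(t)) − f* ≤ c^t·(f(x(0)) − f*) for all t ≥ 0. -/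
open RealInnerProductSpace

section DBFGSAux

variable {d : ℕ}

private lemma dbfgs_psd_inner_nonneg {M : Matrix (Fin d) (Fin d) ℝ} (hM : M.PosSemidef)
    (v : EuclideanSpace ℝ (Fin d)) : 0 ≤ ⟪(Matrix.toEuclideanLin M) v, v⟫ := by
  rw [real_inner_comm, EuclideanSpace.inner_eq_star_dotProduct,
    Matrix.ofLp_toEuclideanLin_apply]
  rw [dotProduct_comm]
  exact hM.dotProduct_mulVec_nonneg _

private lemma dbfgs_sym_inner {M : Matrix (Fin d) (Fin d) ℝ} (hM : M.IsHermitian)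
    (u v : EuclideanSpace ℝ (Fin d)) :
    ⟪Matrix.toEuclideanLin M u, v⟫ = ⟪u, Matrix.toEuclideanLin M v⟫ :=
  (Matrix.isHermitian_iff_isSymmetric.mp hM) u v

private lemma dbfgs_toEuc_sub_smul_one (A : Matrix (Fin d) (Fin d) ℝ) (a : ℝ) :
    Matrix.toEuclideanLin (A - a • 1) = Matrix.toEuclideanLin A - a • LinearMap.id := by
  rw [map_sub, map_smul]
  congr 1
  ext v
  simp [Matrix.toEuclideanLin_apply]

private lemma dbfgs_toEuc_smul_one_sub (A : Matrix (Fin d) (Fin d) ℝ) (a : ℝ) :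
    Matrix.toEuclideanLin (a • (1 : Matrix (Fin d) (Fin d) ℝ) - A)
      = a • LinearMap.id - Matrix.toEuclideanLin A := by
  rw [map_sub, map_smul]
  congr 1
  ext v
  simp [Matrix.toEuclideanLin_apply]

private lemma dbfgs_psd_cs {T : EuclideanSpace ℝ (Fin d) →ₗ[ℝ] EuclideanSpace ℝ (Fin d)}
    (hsym : ∀ u v, ⟪T u, v⟫ = ⟪u, T v⟫) (hpos : ∀ v, 0 ≤ ⟪T v, v⟫)
    (u v : EuclideanSpace ℝ (Fin d)) :
    ⟪T u, v⟫ ^ 2 ≤ ⟪T u, u⟫ * ⟪T v, v⟫ := by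
  have key : ∀ a : ℝ, 0 ≤ ⟪T v, v⟫ * (a * a) + (2 * ⟪T u, v⟫) * a + ⟪T u, u⟫ := by
    intro a
    have h0 := hpos (u + a • v)
    have e1 : T (u + a • v) = T u + a • T v := by simp
    rw [e1, inner_add_left, inner_add_right, inner_add_right,
      real_inner_smul_left, real_inner_smul_left, real_inner_smul_right,
      real_inner_smul_right] at h0
    have hvu : ⟪T v, u⟫ = ⟪T u, v⟫ := by rw [hsym, real_inner_comm]
    rw [hvu] at h0
    nlinarith [h0]
  have hd := discrim_le_zero key
  rw [discrim] at hd
  nlinarith [hd]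

private lemma dbfgs_grad_inner (f : EuclideanSpace ℝ (Fin d) → ℝ)
    (y v : EuclideanSpace ℝ (Fin d)) :
    ⟪gradient f y, v⟫ = fderiv ℝ f y v :=
  InnerProductSpace.toDual_symm_apply

private lemma dbfgs_grad_differentiable {f : EuclideanSpace ℝ (Fin d) → ℝ}
    (hf : ContDiff ℝ 2 f) : Differentiable ℝ (gradient f) := by
  have h1 : ContDiff ℝ 1 (fderiv ℝ f) := hf.fderiv_right (by norm_num)
  have : gradient f = fun y => (InnerProductSpace.toDual ℝ (EuclideanSpace ℝ (Fin d))).symm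
      (fderiv ℝ f y) := rfl
  rw [this]
  exact ((InnerProductSpace.toDual ℝ (EuclideanSpace ℝ (Fin d))).symm.toContinuousLinearEquiv
    : _ ≃L[ℝ] _).differentiable.comp (h1.differentiable one_ne_zero)

private lemma dbfgs_taylor_bounds {f : EuclideanSpace ℝ (Fin d) → ℝ} (hf : ContDiff ℝ 2 f)
    {μ L : ℝ}
    (hHess : ∀ x v : EuclideanSpace ℝ (Fin d),
      μ * ‖v‖ ^ 2 ≤ ⟪(fderiv ℝ (gradient f) x) v, v⟫ ∧
        ⟪(fderiv ℝ (gradient f) x) v, v⟫ ≤ L * ‖v‖ ^ 2)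
    (p v : EuclideanSpace ℝ (Fin d)) :
    f p + ⟪gradient f p, v⟫ + μ / 2 * ‖v‖ ^ 2 ≤ f (p + v) ∧
      f (p + v) ≤ f p + ⟪gradient f p, v⟫ + L / 2 * ‖v‖ ^ 2 := by
  set G := gradient f with hGdef
  have hdf : Differentiable ℝ f := hf.differentiable (by norm_num)
  have hG : Differentiable ℝ G := dbfgs_grad_differentiable hf
  set c : ℝ → EuclideanSpace ℝ (Fin d) := fun s => p + s • v with hcdef
  have hc : ∀ s : ℝ, HasDerivAt c v s := by
    intro s
    have h1 : HasDerivAt (fun s : ℝ => s • v) ((1 : ℝ) • v) s :=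
      (hasDerivAt_id s).smul_const v
    simpa [hcdef] using h1.const_add p
  have hc0 : c 0 = p := by simp [hcdef]
  have hc1 : c 1 = p + v := by simp [hcdef]
  set ψ : ℝ → ℝ := fun s => ⟪v, G (c s)⟫ with hψdef
  have hψ : ∀ s : ℝ, HasDerivAt ψ ⟪v, (fderiv ℝ G (c s)) v⟫ s := by
    intro s
    have h1 : HasFDerivAt G (fderiv ℝ G (c s)) (c s) := (hG (c s)).hasFDerivAt
    have h2 := h1.comp_hasDerivAt s (hc s)
    exact (innerSL ℝ v).hasFDerivAt.comp_hasDerivAt s h2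
  have hψbd : ∀ s : ℝ, μ * ‖v‖ ^ 2 ≤ ⟪v, (fderiv ℝ G (c s)) v⟫ ∧
      ⟪v, (fderiv ℝ G (c s)) v⟫ ≤ L * ‖v‖ ^ 2 := by
    intro s
    rw [real_inner_comm]
    exact hHess (c s) v
  have hφ : ∀ s : ℝ, HasDerivAt (fun s => f (c s)) (ψ s) s := by
    intro s
    have h1 : HasFDerivAt f (fderiv ℝ f (c s)) (c s) := (hdf (c s)).hasFDerivAt
    have h2 := h1.comp_hasDerivAt s (hc s)
    have : fderiv ℝ f (c s) v = ψ s := by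
      show fderiv ℝ f (c s) v = ⟪v, G (c s)⟫
      rw [real_inner_comm, hGdef, dbfgs_grad_inner]
    rwa [this] at h2
  have incr : ∀ s : ℝ, 0 ≤ s →
      μ * ‖v‖ ^ 2 * s ≤ ψ s - ψ 0 ∧ ψ s - ψ 0 ≤ L * ‖v‖ ^ 2 * s := by
    intro s hs
    constructor
    · have hd : ∀ u : ℝ, HasDerivAt (fun s => ψ s - μ * ‖v‖ ^ 2 * s)
          (⟪v, (fderiv ℝ G (c u)) v⟫ - μ * ‖v‖ ^ 2) u := by
        intro u
        have h := (hψ u).sub ((hasDerivAt_id u).const_mul (μ * ‖v‖ ^ 2))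
        simp only [mul_one] at h
        exact h
      have hmono : Monotone (fun s => ψ s - μ * ‖v‖ ^ 2 * s) := by
        apply monotone_of_deriv_nonneg
        · exact fun u => (hd u).differentiableAt
        · intro u
          rw [(hd u).deriv]
          linarith [(hψbd u).1]
      have := hmono hs
      simp only at this
      linarith [this]
    · have hd : ∀ u : ℝ, HasDerivAt (fun s => ψ s - L * ‖v‖ ^ 2 * s)
          (⟪v, (fderiv ℝ G (c u)) v⟫ - L * ‖v‖ ^ 2) u := by
        intro u
        have h := (hψ u).sub ((hasDerivAt_id u).const_mul (L * ‖v‖ ^ 2))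
        simp only [mul_one] at h
        exact h
      have hmono : Antitone (fun s => ψ s - L * ‖v‖ ^ 2 * s) := by
        apply antitone_of_deriv_nonpos
        · exact fun u => (hd u).differentiableAt
        · intro u
          rw [(hd u).deriv]
          linarith [(hψbd u).2]
      have := hmono hs
      simp only at this
      linarith [this]
  constructor
  · set χ : ℝ → ℝ := fun s => f (c s) - s * ψ 0 - μ * ‖v‖ ^ 2 * s ^ 2 / 2 with hχdef
    have hd : ∀ u : ℝ, HasDerivAt χ (ψ u - ψ 0 - μ * ‖v‖ ^ 2 * u) u := by
      intro u
      have h1 := (hφ u).sub (hasDerivAt_mul_const (ψ 0))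
      have h2 : HasDerivAt (fun s : ℝ => μ * ‖v‖ ^ 2 * s ^ 2 / 2)
          (μ * ‖v‖ ^ 2 * u) u := by
        have := ((hasDerivAt_pow 2 u).const_mul (μ * ‖v‖ ^ 2)).div_const 2
        convert this using 1
        · rfl
        · rfl
        · norm_num
          ring
      exact h1.sub h2
    have hmono : MonotoneOn χ (Set.Icc 0 1) := by
      have hdiff : Differentiable ℝ χ := fun u => (hd u).differentiableAt
      apply monotoneOn_of_deriv_nonneg (convex_Icc 0 1)
      · exact hdiff.continuous.continuousOn
      · exact hdiff.differentiableOn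
      · intro u hu
        rw [interior_Icc] at hu
        rw [(hd u).deriv]
        linarith [(incr u (le_of_lt hu.1)).1]
    have h01 := hmono (Set.left_mem_Icc.mpr zero_le_one) (Set.right_mem_Icc.mpr zero_le_one)
      zero_le_one
    have e0 : χ 0 = f p := by simp [hχdef, hc0]
    have e1 : χ 1 = f (p + v) - ψ 0 - μ * ‖v‖ ^ 2 / 2 := by simp [hχdef, hc1]
    have eψ0 : ψ 0 = ⟪G p, v⟫ := by rw [hψdef]; simp only [hc0]; exact real_inner_comm _ _
    rw [e0, e1, eψ0] at h01
    linarith [h01]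
  · set χ : ℝ → ℝ := fun s => f (c s) - s * ψ 0 - L * ‖v‖ ^ 2 * s ^ 2 / 2 with hχdef
    have hd : ∀ u : ℝ, HasDerivAt χ (ψ u - ψ 0 - L * ‖v‖ ^ 2 * u) u := by
      intro u
      have h1 := (hφ u).sub (hasDerivAt_mul_const (ψ 0))
      have h2 : HasDerivAt (fun s : ℝ => L * ‖v‖ ^ 2 * s ^ 2 / 2)
          (L * ‖v‖ ^ 2 * u) u := by
        have := ((hasDerivAt_pow 2 u).const_mul (L * ‖v‖ ^ 2)).div_const 2
        convert this using 1
        · rfl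
        · rfl
        · norm_num
          ring
      exact h1.sub h2
    have hmono : AntitoneOn χ (Set.Icc 0 1) := by
      have hdiff : Differentiable ℝ χ := fun u => (hd u).differentiableAt
      apply antitoneOn_of_deriv_nonpos (convex_Icc 0 1)
      · exact hdiff.continuous.continuousOn
      · exact hdiff.differentiableOn
      · intro u hu
        rw [interior_Icc] at hu
        rw [(hd u).deriv]
        linarith [(incr u (le_of_lt hu.1)).2]
    have h01 := hmono (Set.left_mem_Icc.mpr zero_le_one) (Set.right_mem_Icc.mpr zero_le_one)
      zero_le_one
    have e0 : χ 0 = f p := by simp [hχdef, hc0]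
    have e1 : χ 1 = f (p + v) - ψ 0 - L * ‖v‖ ^ 2 / 2 := by simp [hχdef, hc1]
    have eψ0 : ψ 0 = ⟪G p, v⟫ := by rw [hψdef]; simp only [hc0]; exact real_inner_comm _ _
    rw [e0, e1, eψ0] at h01
    linarith [h01]

end DBFGSAux

set_option maxHeartbeats 1600000 in
/-- Theorem 2 of the paper: linear convergence of synchronous D-BFGS
(preconditioned gradient descent with symmetric preconditioners whose eigenvalues
lie in `[Γ, Δ]`) for strongly convex objectives. -/
theorem dbfgs_sync_strongly_convex_linear_convergence {d : ℕ}
    (f : EuclideanSpace ℝ (Fin d) → ℝ) (μ L : ℝ) (hμ : 0 < μ) (hμL : μ < L)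
    (hf : ContDiff ℝ 2 f)
    (hHess : ∀ x v : EuclideanSpace ℝ (Fin d),
      μ * ‖v‖ ^ 2 ≤ ⟪(fderiv ℝ (gradient f) x) v, v⟫ ∧
        ⟪(fderiv ℝ (gradient f) x) v, v⟫ ≤ L * ‖v‖ ^ 2)
    (xstar : EuclideanSpace ℝ (Fin d)) (hxstar : ∀ z, f xstar ≤ f z)
    (Γ Δ : ℝ) (hΓ : 0 < Γ) (hΓΔ : Γ ≤ Δ)
    (ε : ℝ) (hε : 0 < ε) (hεub : ε < 2 * Γ / (L * Δ ^ 2))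
    (A : ℕ → Matrix (Fin d) (Fin d) ℝ)
    (hAsymm : ∀ t, (A t).IsSymm)
    (hAlow : ∀ t, (A t - Γ • 1).PosSemidef)
    (hAup : ∀ t, (Δ • (1 : Matrix (Fin d) (Fin d) ℝ) - A t).PosSemidef)
    (x : ℕ → EuclideanSpace ℝ (Fin d))
    (hx : ∀ t, x (t + 1) = x t - ε • (Matrix.toEuclideanLin (A t)) (gradient f (x t)))
    (c : ℝ) (hc : c = 1 - (2 * μ * Γ * ε - μ * L * Δ ^ 2 * ε ^ 2)) :
    0 < c ∧ c < 1 ∧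
      ∀ t : ℕ, f (x t) - f xstar ≤ c ^ t * (f (x 0) - f xstar) := by
  have hL : 0 < L := hμ.trans hμL
  have hΔ : 0 < Δ := lt_of_lt_of_le hΓ hΓΔ
  have hεL : L * Δ ^ 2 * ε < 2 * Γ := by
    rw [lt_div_iff₀ (by positivity)] at hεub
    linarith [hεub]
  have hc1 : c < 1 := by
    rw [hc]
    nlinarith [mul_pos hμ hε, mul_pos (mul_pos hμ hε) (sub_pos.mpr hεL)]
  have hc0 : 0 < c := by
    rw [hc]
    nlinarith [mul_nonneg hμ.le (sq_nonneg (L * Δ ^ 2 * ε - Γ)), mul_pos hL (pow_pos hΔ 2),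
      mul_pos (sub_pos.mpr hμL) (pow_pos hΓ 2),
      mul_nonneg hL.le (mul_nonneg (sub_nonneg.mpr hΓΔ) (by linarith : (0:ℝ) ≤ Δ + Γ))]
  -- PL inequality
  have hPL : ∀ t : ℕ, 2 * μ * (f (x t) - f xstar) ≤ ‖gradient f (x t)‖ ^ 2 := by
    intro t
    set g := gradient f (x t)
    set w : EuclideanSpace ℝ (Fin d) := xstar - x t with hw
    have h1 := (dbfgs_taylor_bounds hf hHess (x t) w).1
    have hxw : x t + w = xstar := by rw [hw]; abel
    rw [hxw] at h1
    have h2 : -(‖g‖ * ‖w‖) ≤ ⟪g, w⟫ := neg_le_of_neg_le (by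
      have := abs_real_inner_le_norm g w
      linarith [neg_abs_le ⟪g, w⟫])
    nlinarith [sq_nonneg (‖g‖ - μ * ‖w‖), hμ, norm_nonneg g, norm_nonneg w]
  -- per-step contraction
  have hstep : ∀ t : ℕ, f (x (t + 1)) - f xstar ≤ c * (f (x t) - f xstar) := by
    intro t
    set g := gradient f (x t) with hg
    set T := Matrix.toEuclideanLin (A t) with hT
    have hherm : (A t).IsHermitian := by
      have h := hAsymm t
      rwa [Matrix.IsHermitian, Matrix.conjTranspose, Matrix.IsSymm] at *
    have hsym : ∀ u w, ⟪T u, w⟫ = ⟪u, T w⟫ := dbfgs_sym_inner hherm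
    have hlow : ∀ w : EuclideanSpace ℝ (Fin d), Γ * ‖w‖ ^ 2 ≤ ⟪T w, w⟫ := by
      intro w
      have h := dbfgs_psd_inner_nonneg (hAlow t) w
      rw [dbfgs_toEuc_sub_smul_one, LinearMap.sub_apply, LinearMap.smul_apply,
        LinearMap.id_apply, inner_sub_left, real_inner_smul_left,
        real_inner_self_eq_norm_sq] at h
      linarith [h]
    have hup : ∀ w : EuclideanSpace ℝ (Fin d), ⟪T w, w⟫ ≤ Δ * ‖w‖ ^ 2 := by
      intro w
      have h := dbfgs_psd_inner_nonneg (hAup t) w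
      rw [dbfgs_toEuc_smul_one_sub, LinearMap.sub_apply, LinearMap.smul_apply,
        LinearMap.id_apply, inner_sub_left, real_inner_smul_left,
        real_inner_self_eq_norm_sq] at h
      linarith [h]
    have hpos : ∀ w : EuclideanSpace ℝ (Fin d), 0 ≤ ⟪T w, w⟫ := fun w =>
      le_trans (by positivity) (hlow w)
    have hTnorm : ‖T g‖ ^ 2 ≤ Δ ^ 2 * ‖g‖ ^ 2 := by
      have cs := dbfgs_psd_cs hsym hpos g (T g)
      have e : ⟪T g, T g⟫ = ‖T g‖ ^ 2 := real_inner_self_eq_norm_sq _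
      have step1 : ⟪T g, g⟫ * ⟪T (T g), T g⟫ ≤ (Δ * ‖g‖ ^ 2) * (Δ * ‖T g‖ ^ 2) :=
        mul_le_mul (hup g) (hup (T g)) (hpos (T g)) (by positivity)
      have key : (‖T g‖ ^ 2) ^ 2 ≤ (Δ ^ 2 * ‖g‖ ^ 2) * ‖T g‖ ^ 2 := by
        rw [e] at cs
        nlinarith [cs, step1]
      rcases eq_or_lt_of_le (sq_nonneg ‖T g‖) with h0 | h0
      · rw [← h0]
        positivity
      · exact le_of_mul_le_mul_right (by nlinarith [key]) h0
    have hub := (dbfgs_taylor_bounds hf hHess (x t) (-(ε • T g))).2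
    have hxt : x t + -(ε • T g) = x (t + 1) := by rw [hx t]; abel
    rw [hxt] at hub
    have e1 : ⟪g, -(ε • T g)⟫ = -(ε * ⟪T g, g⟫) := by
      rw [inner_neg_right, real_inner_smul_right, real_inner_comm]
    have e2 : ‖-(ε • T g)‖ ^ 2 = ε ^ 2 * ‖T g‖ ^ 2 := by
      rw [norm_neg, norm_smul, Real.norm_eq_abs, mul_pow, sq_abs]
    rw [e1, e2] at hub
    -- combine
    have hg2 : 2 * μ * (f (x t) - f xstar) ≤ ‖g‖ ^ 2 := hPL t
    have hκ : 0 ≤ ε * Γ - L / 2 * ε ^ 2 * Δ ^ 2 := by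
      nlinarith [mul_nonneg hε.le (by linarith [hεL] : (0:ℝ) ≤ 2 * Γ - L * Δ ^ 2 * ε)]
    have hTg : ε * ⟪T g, g⟫ ≥ ε * (Γ * ‖g‖ ^ 2) :=
      mul_le_mul_of_nonneg_left (hlow g) hε.le
    have hTn : L / 2 * (ε ^ 2 * ‖T g‖ ^ 2) ≤ L / 2 * (ε ^ 2 * (Δ ^ 2 * ‖g‖ ^ 2)) := by
      apply mul_le_mul_of_nonneg_left _ (by positivity)
      exact mul_le_mul_of_nonneg_left hTnorm (by positivity)
    have hcomb : f (x (t + 1)) - f xstar ≤ (f (x t) - f xstar)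
        - (ε * Γ - L / 2 * ε ^ 2 * Δ ^ 2) * ‖g‖ ^ 2 := by
      nlinarith [hub, hTg, hTn]
    have hfin : (ε * Γ - L / 2 * ε ^ 2 * Δ ^ 2) * (2 * μ * (f (x t) - f xstar))
        ≤ (ε * Γ - L / 2 * ε ^ 2 * Δ ^ 2) * ‖g‖ ^ 2 :=
      mul_le_mul_of_nonneg_left hg2 hκ
    rw [hc]
    nlinarith [hcomb, hfin]
  refine ⟨hc0, hc1, ?_⟩
  intro t
  induction t with
  | zero => simp
  | succ n ih =>
    calc f (x (n + 1)) - f xstar ≤ c * (f (x n) - f xstar) := hstep n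
      _ ≤ c * (c ^ n * (f (x 0) - f xstar)) := mul_le_mul_of_nonneg_left ih hc0.le
      _ = c ^ (n + 1) * (f (x 0) - f xstar) := by ring
end

section
/- Let B be a positive integer and let a, b be reals with b ≥ 0 and a > 2bB. Let (f_t)_{t≥0} be a sequence of reals bounded below by f* ∈ ℝ, and let (K_t)_{t≥0} be a sequence of nonnegative reals (with the convention K_τ = 0 for τ < 0) satisfying, for all t ≥ 0, f_{t+1} ≤ f_t − a·K_t² + b·K_t·Σ_{τ=t−B}^{t−1} K_τ. Then Σ_{τ=0}^{t} K_τ² ≤ (f_0 − f*)/(a − 2bB) for all t, so the series Σ_{t} K_t² converges, and consequently lim_{t→∞} K_t = 0. -/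
open Filter

/-- Double-counting: each τ appears in at most B of the windows Ico (t-B) t. -/
lemma double_sum_le (g : ℕ → ℝ) (hg : ∀ n, 0 ≤ g n) (B T : ℕ) :
    ∑ t ∈ Finset.range T, ∑ τ ∈ Finset.Ico (t - B) t, g τ
      ≤ B * ∑ τ ∈ Finset.range T, g τ := by
  have h1 : ∀ t ∈ Finset.range T, ∑ τ ∈ Finset.Ico (t - B) t, g τ
      = ∑ τ ∈ Finset.range T, if τ ∈ Finset.Ico (t - B) t then g τ else 0 := by
    intro t ht
    rw [← Finset.sum_filter, Finset.filter_mem_eq_inter,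
      Finset.inter_eq_right.mpr]
    intro τ hτ
    simp only [Finset.mem_Ico] at hτ
    simp only [Finset.mem_range] at ht ⊢
    omega
  rw [Finset.sum_congr rfl h1, Finset.sum_comm, Finset.mul_sum]
  apply Finset.sum_le_sum
  intro τ hτ
  rw [← Finset.sum_filter]
  have hcard : ((Finset.range T).filter (fun t => τ ∈ Finset.Ico (t - B) t)).card ≤ B := by
    have hsub : (Finset.range T).filter (fun t => τ ∈ Finset.Ico (t - B) t)
        ⊆ Finset.Ioc τ (τ + B) := by
      intro t ht
      simp only [Finset.mem_filter, Finset.mem_range, Finset.mem_Ico] at ht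
      simp only [Finset.mem_Ioc]
      omega
    calc _ ≤ (Finset.Ioc τ (τ + B)).card := Finset.card_le_card hsub
    _ = B := by simp
  calc ∑ t ∈ (Finset.range T).filter (fun t => τ ∈ Finset.Ico (t - B) t), g τ
      = ((Finset.range T).filter (fun t => τ ∈ Finset.Ico (t - B) t)).card * g τ := by
        rw [Finset.sum_const, nsmul_eq_mul]
    _ ≤ B * g τ := by
        apply mul_le_mul_of_nonneg_right _ (hg τ)
        exact_mod_cast hcard

/-- Core summability argument in the proof of Theorem 3 of the paper (convergence of
asynchronous D-BFGS): if `f` is bounded below by `f*` and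
`f_{t+1} ≤ f_t − a K_t² + b K_t Σ_{τ=t−B}^{t−1} K_τ` with `a > 2bB`, then the partial
sums `Σ_{τ=0}^t K_τ²` are bounded by `(f_0 − f*)/(a − 2bB)`, the series `Σ K_t²`
converges, and `K_t → 0`. -/
theorem async_dbfgs_gradient_summability
    (B : ℕ) (hB : 0 < B) (a b : ℝ) (hb : 0 ≤ b) (ha : 2 * b * B < a)
    (f : ℕ → ℝ) (fstar : ℝ) (hlb : ∀ t, fstar ≤ f t)
    (K : ℕ → ℝ) (hK : ∀ t, 0 ≤ K t)
    (hrec : ∀ t, f (t + 1) ≤ f t - a * (K t) ^ 2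
      + b * K t * ∑ τ ∈ Finset.Ico (t - B) t, K τ) :
    (∀ t : ℕ, ∑ τ ∈ Finset.range (t + 1), (K τ) ^ 2 ≤ (f 0 - fstar) / (a - 2 * b * B)) ∧
      Summable (fun t => (K t) ^ 2) ∧
      Tendsto K atTop (nhds 0) := by
  have hden : (0:ℝ) < a - 2 * b * B := by linarith
  -- per-step bound via AM-GM (crude form K_t K_τ ≤ K_t² + K_τ²)
  have hstep : ∀ t, b * K t * ∑ τ ∈ Finset.Ico (t - B) t, K τ
      ≤ b * B * K t ^ 2 + b * ∑ τ ∈ Finset.Ico (t - B) t, K τ ^ 2 := by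
    intro t
    have h1 : K t * ∑ τ ∈ Finset.Ico (t - B) t, K τ
        ≤ ∑ τ ∈ Finset.Ico (t - B) t, (K t ^ 2 + K τ ^ 2) := by
      rw [Finset.mul_sum]
      apply Finset.sum_le_sum
      intro τ _
      nlinarith [hK t, hK τ, sq_nonneg (K t - K τ)]
    have h2 : ∑ τ ∈ Finset.Ico (t - B) t, (K t ^ 2 + K τ ^ 2)
        = (Finset.Ico (t - B) t).card * K t ^ 2 + ∑ τ ∈ Finset.Ico (t - B) t, K τ ^ 2 := by
      rw [Finset.sum_add_distrib, Finset.sum_const, nsmul_eq_mul]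
    have hcard : ((Finset.Ico (t - B) t).card : ℝ) ≤ B := by
      rw [Nat.card_Ico]; exact_mod_cast Nat.le_of_lt_succ (by omega)
    have h3 : K t * ∑ τ ∈ Finset.Ico (t - B) t, K τ
        ≤ B * K t ^ 2 + ∑ τ ∈ Finset.Ico (t - B) t, K τ ^ 2 := by
      rw [h2] at h1
      nlinarith [sq_nonneg (K t)]
    calc b * K t * ∑ τ ∈ Finset.Ico (t - B) t, K τ
        = b * (K t * ∑ τ ∈ Finset.Ico (t - B) t, K τ) := by ring
      _ ≤ b * (B * K t ^ 2 + ∑ τ ∈ Finset.Ico (t - B) t, K τ ^ 2) :=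
          mul_le_mul_of_nonneg_left h3 hb
      _ = b * B * K t ^ 2 + b * ∑ τ ∈ Finset.Ico (t - B) t, K τ ^ 2 := by ring
  -- telescoping
  have htel : ∀ T, f T ≤ f 0 - a * ∑ t ∈ Finset.range T, K t ^ 2
      + b * B * ∑ t ∈ Finset.range T, K t ^ 2
      + b * ∑ t ∈ Finset.range T, ∑ τ ∈ Finset.Ico (t - B) t, K τ ^ 2 := by
    intro T
    induction T with
    | zero => simp
    | succ T ih =>
      have := hrec T
      have := hstep T
      rw [Finset.sum_range_succ, Finset.sum_range_succ]
      linarith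
  have hbound : ∀ T, ∑ t ∈ Finset.range T, K t ^ 2 ≤ (f 0 - fstar) / (a - 2 * b * B) := by
    intro T
    have hd := double_sum_le (fun τ => K τ ^ 2) (fun τ => sq_nonneg _) B T
    have h1 := htel T
    have h2 := hlb T
    rw [le_div_iff₀ hden]
    nlinarith
  refine ⟨fun t => hbound (t + 1), ?_, ?_⟩
  · have hsum : Summable (fun t => K t ^ 2) :=
      summable_of_sum_range_le (fun t => sq_nonneg _) hbound
    exact hsum
  · have hsum : Summable (fun t => K t ^ 2) :=
      summable_of_sum_range_le (fun t => sq_nonneg _) hbound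
    have h0 : Tendsto (fun t => K t ^ 2) atTop (nhds 0) := hsum.tendsto_atTop_zero
    have hsqrt : Tendsto (fun t => Real.sqrt (K t ^ 2)) atTop (nhds 0) := by
      have := (Real.continuous_sqrt.tendsto 0).comp h0
      simpa [Function.comp_def] using this
    refine hsqrt.congr (fun t => ?_)
    rw [Real.sqrt_sq (hK t)]
end

section
/- Let (V(t))_{t≥0} be a sequence of nonnegative reals, let p, q > 0 with p + q < 1, and let d : ℕ → ℕ satisfy 0 ≤ d(t) ≤ d_max for some constant d_max > 0. If V(t+1) ≤ p·V(t) + q·max_{max(0, t−d(t)) ≤ l ≤ t} V(l) for all t ≥ 0, then V(t) ≤ (p+q)^{t/(1+d_max)}·V(0) for all t ≥ 0; in particular V(t) converges to zero at a linear rate. -/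
/-- Lemma on delayed linear recursions (Lemma 4 of the paper, Appendix E): a nonnegative
sequence satisfying `V(t+1) ≤ p V(t) + q max_{t−d(t) ≤ l ≤ t} V(l)` with `p + q < 1` and
bounded delays `d(t) ≤ d_max` converges linearly:
`V(t) ≤ (p+q)^{t/(1+d_max)} V(0)`. -/
theorem delayed_linear_recursion_linear_rate
    (V : ℕ → ℝ) (hV : ∀ t, 0 ≤ V t)
    (p q : ℝ) (hp : 0 < p) (hq : 0 < q) (hpq : p + q < 1)
    (dmax : ℕ) (hdmax : 0 < dmax)
    (d : ℕ → ℕ) (hd : ∀ t, d t ≤ dmax)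
    (hrec : ∀ t, V (t + 1) ≤ p * V t +
      q * (Finset.Icc (t - d t) t).sup' (Finset.nonempty_Icc.mpr (Nat.sub_le t (d t))) V) :
    ∀ t : ℕ, V t ≤ (p + q) ^ ((t : ℝ) / (1 + (dmax : ℝ))) * V 0 := by
  have hA0 : (0:ℝ) < p + q := by linarith
  have hA1 : p + q ≤ 1 := le_of_lt hpq
  have hc : (0:ℝ) < 1 + (dmax : ℝ) := by positivity
  intro t
  induction t using Nat.strong_induction_on with
  | _ t ih =>
    match t with
    | 0 =>
        simp only [Nat.cast_zero, zero_div, Real.rpow_zero, one_mul]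
        exact le_refl _
    | Nat.succ t =>
        set c := 1 + (dmax : ℝ) with hcdef
        set B : ℝ := (p + q) ^ (((t:ℝ) - dmax) / c) with hBdef
        have hB0 : 0 ≤ B := le_of_lt (Real.rpow_pos_of_pos hA0 _)
        -- bound on the sup'
        have hsup : (Finset.Icc (t - d t) t).sup'
            (Finset.nonempty_Icc.mpr (Nat.sub_le t (d t))) V ≤ B * V 0 := by
          apply Finset.sup'_le
          intro l hl
          obtain ⟨hl1, hl2⟩ := Finset.mem_Icc.mp hl
          have h1 : V l ≤ (p + q) ^ ((l:ℝ)/c) * V 0 := ih l (Nat.lt_succ_of_le hl2)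
          have h2 : (t:ℝ) - dmax ≤ (l:ℝ) := by
            have hnat : t ≤ l + dmax := by
              have := hd t; omega
            have : (t:ℝ) ≤ (l:ℝ) + (dmax:ℝ) := by exact_mod_cast hnat
            linarith
          have h3 : (p + q) ^ ((l:ℝ)/c) ≤ B := by
            apply Real.rpow_le_rpow_of_exponent_ge hA0 hA1
            exact div_le_div_of_nonneg_right h2 hc.le
          calc V l ≤ (p + q) ^ ((l:ℝ)/c) * V 0 := h1
            _ ≤ B * V 0 := mul_le_mul_of_nonneg_right h3 (hV 0)
        have hVt : V t ≤ (p + q) ^ ((t:ℝ)/c) * V 0 := ih t (Nat.lt_succ_self t)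
        have h4 : (p + q) ^ ((t:ℝ)/c) ≤ B := by
          apply Real.rpow_le_rpow_of_exponent_ge hA0 hA1
          apply div_le_div_of_nonneg_right _ hc.le
          have : (0:ℝ) ≤ (dmax:ℝ) := Nat.cast_nonneg _
          linarith
        have hfinal : (((t+1 : ℕ)):ℝ) / c = ((t:ℝ) - dmax)/c + 1 := by
          field_simp
          push_cast; rw [hcdef]; ring
        have hgoal : (p + q) ^ ((((t+1 : ℕ)):ℝ) / c) = B * (p + q) := by
          rw [hfinal, Real.rpow_add hA0, Real.rpow_one, hBdef]
        calc V (t + 1) ≤ p * V t + q * ((Finset.Icc (t - d t) t).sup'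
              (Finset.nonempty_Icc.mpr (Nat.sub_le t (d t))) V) := hrec t
          _ ≤ p * ((p + q) ^ ((t:ℝ)/c) * V 0) + q * (B * V 0) := by
              apply add_le_add
              · exact mul_le_mul_of_nonneg_left hVt (le_of_lt hp)
              · exact mul_le_mul_of_nonneg_left hsup (le_of_lt hq)
          _ ≤ p * (B * V 0) + q * (B * V 0) := by
              apply add_le_add_left
              apply mul_le_mul_of_nonneg_left _ (le_of_lt hp)
              exact mul_le_mul_of_nonneg_right h4 (hV 0)
          _ = B * (p + q) * V 0 := by ring
          _ = (p + q) ^ ((((t+1 : ℕ)):ℝ) / c) * V 0 := by rw [hgoal]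
end
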